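/- With the iterated matching-removal setup on a bipartite graph G: the maximum independent set I_k of the residual graph G_k satisfies |I_k| ≥ (1/2 + 1/(2(k+1)))·|I*_k|, where I*_k is a maximum k-dependent set of G. -/

import Mathlib

open scoped Classical

variable {V : Type*} [Fintype V] [DecidableEq V]

/-- A matching of `G`, given as a finite set of edges of `G` that are pairwise vertex-disjoint. -/
def IsMatchingE (G : SimpleGraph V) (M : Finset (Sym2 V)) : Prop :=
  ↑M ⊆ G.edgeSet ∧ (M : Set (Sym2 V)).Pairwise fun e f => ∀ v, v ∈ e → v ∉ f

/-- A maximum-cardinality matching of `G`. -/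
def IsMaxMatchingE (G : SimpleGraph V) (M : Finset (Sym2 V)) : Prop :=
  IsMatchingE G M ∧ ∀ M', IsMatchingE G M' → M'.card ≤ M.card

/-- An independent set of `G`. -/
def IsIndepF (G : SimpleGraph V) (S : Finset V) : Prop :=
  ∀ v ∈ S, ∀ w ∈ S, ¬G.Adj v w

/-- A maximum-cardinality independent set of `G`. -/
def IsMaxIndepF (G : SimpleGraph V) (S : Finset V) : Prop :=
  IsIndepF G S ∧ ∀ S', IsIndepF G S' → S'.card ≤ S.card

/-- A `k`-dependent set: every vertex of the induced subgraph `G[S]` has degree at most `k`. -/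
def KDepSet (G : SimpleGraph V) (k : ℕ) (S : Finset V) : Prop :=
  ∀ v ∈ S, (S.filter fun w => G.Adj v w).card ≤ k

/-- A maximum-cardinality `k`-dependent set of `G`. -/
def IsMaxKDep (G : SimpleGraph V) (k : ℕ) (S : Finset V) : Prop :=
  KDepSet G k S ∧ ∀ T, KDepSet G k T → T.card ≤ S.card

/-- The edges of the induced subgraph `G[S]`. -/
noncomputable def inducedEdges (G : SimpleGraph V) (S : Finset V) : Finset (Sym2 V) :=
  G.edgeFinset.filter fun e => ∀ v ∈ e, v ∈ S

/-- The residual graph after deleting the matchings `M 0, ..., M (i-1)` from `G`. -/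
def resid (G : SimpleGraph V) (M : ℕ → Finset (Sym2 V)) (i : ℕ) : SimpleGraph V :=
  G.deleteEdges (⋃ j ∈ Set.Iio i, (M j : Set (Sym2 V)))

/-- The accumulated set of deleted edges `M 0 ∪ ... ∪ M (k-1)`. -/
def accumM (M : ℕ → Finset (Sym2 V)) (k : ℕ) : Finset (Sym2 V) :=
  (Finset.range k).biUnion M

lemma koenig (H : SimpleGraph V) (hH : H.Colorable 2) (Mo : Finset (Sym2 V))
    (hMo : IsMaxMatchingE H Mo) :
    ∃ J : Finset V, IsIndepF H J ∧ Fintype.card V ≤ J.card + Mo.card := by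
  obtain ⟨C⟩ := hH
  classical
  set X : Finset V := Finset.univ.filter (fun v => C v = 0) with hX
  set Y : Finset V := Finset.univ.filter (fun v => ¬ (C v = 0)) with hY
  have hfin2 : ∀ a b : Fin 2, a ≠ 0 → b ≠ 0 → a = b := by decide
  have hXmem : ∀ {v}, v ∈ X ↔ C v = 0 := by intro v; simp [hX]
  have hYmem : ∀ {v}, v ∈ Y ↔ ¬ (C v = 0) := by intro v; simp [hY]
  have hXY : ∀ {x y}, H.Adj x y → C x = 0 → ¬ (C y = 0) := by
    intro x y hadj hx hy
    exact C.valid hadj (by rw [hx, hy])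
  set NB : Finset V → Finset V := fun S => Y.filter (fun y => ∃ x ∈ S, H.Adj x y) with hNB
  set d : ℕ := X.powerset.sup (fun S => S.card - (NB S).card) with hd
  have hdle : ∀ S ⊆ X, S.card ≤ (NB S).card + d := by
    intro S hS
    have := Finset.le_sup (f := fun S => S.card - (NB S).card) (Finset.mem_powerset.2 hS)
    change S.card - (NB S).card ≤ d at this
    omega
  -- Hall matching giving X.card ≤ Mo.card + d
  have hmatch : X.card ≤ Mo.card + d := by
    set t : {x // x ∈ X} → Finset (V ⊕ Fin d) :=
      fun x => ((H.neighborFinset x.1).image Sum.inl) ∪ (Finset.univ.image Sum.inr) with ht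
    have hall : ∀ s : Finset {x // x ∈ X}, s.card ≤ (s.biUnion t).card := by
      intro s
      rcases s.eq_empty_or_nonempty with rfl | ⟨x0, hx0⟩
      · simp
      set s' : Finset V := s.image (fun x => x.1) with hs'def
      have hs'card : s'.card = s.card :=
        Finset.card_image_of_injective _ Subtype.val_injective
      have hs'X : s' ⊆ X := by
        intro x hx
        obtain ⟨xx, _, rfl⟩ := Finset.mem_image.1 hx
        exact xx.2
      have hsub : ((NB s').image Sum.inl ∪ Finset.univ.image Sum.inr) ⊆ s.biUnion t := by
        intro z hz
        rcases Finset.mem_union.1 hz with hz | hz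
        · obtain ⟨y, hy, rfl⟩ := Finset.mem_image.1 hz
          obtain ⟨x, hx, hadj⟩ := (Finset.mem_filter.1 hy).2
          obtain ⟨xx, hxx, rfl⟩ := Finset.mem_image.1 hx
          refine Finset.mem_biUnion.2 ⟨xx, hxx, Finset.mem_union_left _ ?_⟩
          exact Finset.mem_image.2 ⟨y, by simpa [SimpleGraph.mem_neighborFinset] using hadj, rfl⟩
        · exact Finset.mem_biUnion.2 ⟨x0, hx0, Finset.mem_union_right _ hz⟩
      have hdisj : Disjoint ((NB s').image Sum.inl : Finset (V ⊕ Fin d)) ((Finset.univ : Finset (Fin d)).image Sum.inr) := by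
        rw [Finset.disjoint_left]
        rintro z hz1 hz2
        obtain ⟨y, _, rfl⟩ := Finset.mem_image.1 hz1
        obtain ⟨j, _, hj⟩ := Finset.mem_image.1 hz2
        exact absurd hj (by simp)
      have hcard2 : (NB s').card + d ≤ (s.biUnion t).card := by
        have hcu : ((NB s').image Sum.inl ∪ Finset.univ.image Sum.inr :
            Finset (V ⊕ Fin d)).card = (NB s').card + d := by
          rw [Finset.card_union_of_disjoint hdisj,
            Finset.card_image_of_injective (NB s') Sum.inl_injective,
            Finset.card_image_of_injective Finset.univ Sum.inr_injective,
            Finset.card_univ, Fintype.card_fin]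
        have := Finset.card_le_card hsub
        rwa [hcu] at this
      calc s.card = s'.card := hs'card.symm
        _ ≤ (NB s').card + d := hdle s' hs'X
        _ ≤ (s.biUnion t).card := hcard2
    obtain ⟨f, hfinj, hft⟩ := (Finset.all_card_le_biUnion_card_iff_exists_injective t).1 hall
    set P : Finset {x // x ∈ X} := Finset.univ.filter (fun x => (f x).isLeft = true) with hP
    have hPcard : X.card ≤ P.card + d := by
      have h1 : (Finset.univ.filter (fun x : {x // x ∈ X} => ¬ ((f x).isLeft = true))).card ≤ d := by
        have himg : (Finset.univ.filter (fun x : {x // x ∈ X} => ¬ ((f x).isLeft = true))).image f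
            ⊆ Finset.univ.image Sum.inr := by
          intro z hz
          obtain ⟨x, hx, rfl⟩ := Finset.mem_image.1 hz
          have hfx := hft x
          rcases Finset.mem_union.1 hfx with h | h
          · obtain ⟨y, _, hy⟩ := Finset.mem_image.1 h
            exfalso
            have := (Finset.mem_filter.1 hx).2
            rw [← hy] at this
            simp at this
          · exact h
        have := Finset.card_le_card himg
        rwa [Finset.card_image_of_injective _ hfinj,
          Finset.card_image_of_injective _ Sum.inr_injective,
          Finset.card_univ, Fintype.card_fin] at this
      have h2 := Finset.card_filter_add_card_filter_not
        (s := (Finset.univ : Finset {x // x ∈ X})) (p := fun x => (f x).isLeft = true)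
      have h3 : (Finset.univ : Finset {x // x ∈ X}).card = X.card := by
        rw [Finset.card_univ, Fintype.card_coe]
      rw [← hP] at h2
      omega
    have hPy : ∀ x ∈ P, ∃ y, f x = Sum.inl y ∧ H.Adj x.1 y := by
      intro x hx
      have hfx := hft x
      rcases Finset.mem_union.1 hfx with h | h
      · obtain ⟨y, hy, hfy⟩ := Finset.mem_image.1 h
        exact ⟨y, hfy.symm, (SimpleGraph.mem_neighborFinset _ _ _).1 hy⟩
      · obtain ⟨j, _, hfj⟩ := Finset.mem_image.1 h
        exfalso
        have := (Finset.mem_filter.1 hx).2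
        rw [← hfj] at this
        simp at this
    set ψ : {x // x ∈ X} → V := fun x => Sum.elim id (fun _ => x.1) (f x) with hψdef
    have hψ : ∀ x ∈ P, f x = Sum.inl (ψ x) ∧ H.Adj x.1 (ψ x) := by
      intro x hx
      obtain ⟨y, hfy, hadj⟩ := hPy x hx
      have : ψ x = y := by rw [hψdef]; simp [hfy]
      rw [this]
      exact ⟨hfy, hadj⟩
    have hψcol : ∀ x ∈ P, ¬ (C (ψ x) = 0) := by
      intro x hx
      exact hXY (hψ x hx).2 (hXmem.1 x.2)
    set M' : Finset (Sym2 V) := P.image (fun x => s(x.1, ψ x)) with hM'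
    have hinjP : Set.InjOn (fun x : {x // x ∈ X} => s(x.1, ψ x)) P := by
      intro x hx x' hx' heq
      simp only [Sym2.eq_iff] at heq
      rcases heq with ⟨h1, _⟩ | ⟨h1, h2⟩
      · exact Subtype.ext h1
      · exfalso
        exact hψcol x' (by simpa using hx') (h1 ▸ hXmem.1 x.2)
    have hM'card : M'.card = P.card := Finset.card_image_of_injOn hinjP
    have hM'match : IsMatchingE H M' := by
      constructor
      · intro e he
        obtain ⟨x, hx, rfl⟩ := Finset.mem_image.1 (by exact_mod_cast he)
        rw [SimpleGraph.mem_edgeSet]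
        exact (hψ x hx).2
      · rintro e he e' he' hne v hve hve'
        obtain ⟨x, hx, rfl⟩ := Finset.mem_image.1 (by exact_mod_cast he)
        obtain ⟨x', hx', rfl⟩ := Finset.mem_image.1 (by exact_mod_cast he')
        have hxx' : x ≠ x' := fun h => hne (by rw [h])
        have hv1 := Sym2.mem_iff.1 hve
        have hv2 := Sym2.mem_iff.1 hve'
        have hψψ : ψ x ≠ ψ x' := by
          intro h
          apply hxx'
          apply hfinj
          rw [(hψ x hx).1, (hψ x' hx').1, h]
        have hc1 : x.1 ≠ ψ x' := fun h => hψcol x' hx' (h ▸ hXmem.1 x.2)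
        have hc2 : ψ x ≠ x'.1 := fun h => hψcol x hx (h ▸ hXmem.1 x'.2)
        have hvals : x.1 ≠ x'.1 := fun h => hxx' (Subtype.ext h)
        rcases hv1 with rfl | rfl <;> rcases hv2 with h | h <;> tauto
    have := hMo.2 M' hM'match
    omega
  -- choose the deficiency witness
  obtain ⟨S0, hS0mem, hS0⟩ := Finset.exists_mem_eq_sup X.powerset
    ⟨∅, Finset.empty_mem_powerset X⟩ (fun S => S.card - (NB S).card)
  set S₁ : Finset V := if d = 0 then ∅ else S0 with hS₁def
  have hS₁X : S₁ ⊆ X := by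
    rw [hS₁def]
    split
    · exact Finset.empty_subset X
    · exact Finset.mem_powerset.1 hS0mem
  have hNBe : NB ∅ = ∅ := by
    rw [hNB]
    simp
  have hS₁card : S₁.card = (NB S₁).card + d := by
    rw [hS₁def]
    split
    · next h => rw [hNBe]; simp [h]
    · next h =>
      have : d = S0.card - (NB S0).card := hS0
      omega
  refine ⟨S₁ ∪ (Y \ NB S₁), ?_, ?_⟩
  · intro u hu w hw hadj
    rcases Finset.mem_union.1 hu with hu | hu <;> rcases Finset.mem_union.1 hw with hw | hw
    · exact C.valid hadj (by rw [hXmem.1 (hS₁X hu), hXmem.1 (hS₁X hw)])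
    · have hw2 := Finset.mem_sdiff.1 hw
      exact hw2.2 (Finset.mem_filter.2 ⟨hw2.1, ⟨u, hu, hadj⟩⟩)
    · have hu2 := Finset.mem_sdiff.1 hu
      exact hu2.2 (Finset.mem_filter.2 ⟨hu2.1, ⟨w, hw, hadj.symm⟩⟩)
    · have h1 := hYmem.1 (Finset.mem_sdiff.1 hu).1
      have h2 := hYmem.1 (Finset.mem_sdiff.1 hw).1
      exact C.valid hadj (hfin2 _ _ h1 h2)
  · have hdisjXY : Disjoint S₁ (Y \ NB S₁) := by
      rw [Finset.disjoint_left]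
      intro v hv hv2
      exact hYmem.1 (Finset.mem_sdiff.1 hv2).1 (hXmem.1 (hS₁X hv))
    have hNBsub : NB S₁ ⊆ Y := Finset.filter_subset _ _
    have hcard : (S₁ ∪ (Y \ NB S₁)).card = S₁.card + (Y.card - (NB S₁).card) := by
      rw [Finset.card_union_of_disjoint hdisjXY, Finset.card_sdiff_of_subset hNBsub]
    have hNBY : (NB S₁).card ≤ Y.card := Finset.card_le_card hNBsub
    have hXYn : X.card + Y.card = Fintype.card V := by
      have := Finset.card_filter_add_card_filter_not
        (s := (Finset.univ : Finset V)) (p := fun v => C v = 0)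
      simpa [← hX, ← hY, Finset.card_univ] using this
    omega

section helpers

lemma card_filter_mem_sym2 (e : Sym2 V) (he : ¬ e.IsDiag) :
    (Finset.univ.filter (· ∈ e)).card = 2 := by
  induction e using Sym2.ind with
  | _ x y =>
    rw [Sym2.mk_isDiag_iff] at he
    have hxy : Finset.univ.filter (· ∈ s(x, y)) = {x, y} := by
      ext v
      simp [Sym2.mem_iff]
    rw [hxy, Finset.card_insert_of_notMem (by simp [he]), Finset.card_singleton]

noncomputable def otherV (v : V) (e : Sym2 V) : V :=
  if h : v ∈ e then Sym2.Mem.other h else v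

lemma otherV_spec {v : V} {e : Sym2 V} (h : v ∈ e) : s(v, otherV v e) = e := by
  rw [otherV, dif_pos h]
  exact Sym2.other_spec h

lemma otherV_mem {v : V} {e : Sym2 V} (h : v ∈ e) : otherV v e ∈ e := by
  rw [otherV, dif_pos h]
  exact Sym2.other_mem h

lemma mem_resid_edgeSet (G : SimpleGraph V) (M : ℕ → Finset (Sym2 V)) (i : ℕ) (e : Sym2 V) :
    e ∈ (resid G M i).edgeSet ↔ e ∈ G.edgeSet ∧ ∀ j < i, e ∉ M j := by
  rw [resid, SimpleGraph.edgeSet_deleteEdges]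
  constructor
  · rintro ⟨h1, h2⟩
    exact ⟨h1, fun j hj hmem => h2 (Set.mem_biUnion (Set.mem_Iio.2 hj) (Finset.mem_coe.2 hmem))⟩
  · rintro ⟨h1, h2⟩
    refine ⟨h1, fun hmem => ?_⟩
    rw [Set.mem_iUnion₂] at hmem
    obtain ⟨j, hj, hmem⟩ := hmem
    exact h2 j (Set.mem_Iio.1 hj) (Finset.mem_coe.1 hmem)

lemma resid_adj (G : SimpleGraph V) (M : ℕ → Finset (Sym2 V)) (i : ℕ) (u w : V) :
    (resid G M i).Adj u w ↔ G.Adj u w ∧ ∀ j < i, s(u, w) ∉ M j := by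
  rw [resid, SimpleGraph.deleteEdges_adj]
  constructor
  · rintro ⟨h1, h2⟩
    exact ⟨h1, fun j hj hmem => h2 (Set.mem_biUnion (Set.mem_Iio.2 hj) (Finset.mem_coe.2 hmem))⟩
  · rintro ⟨h1, h2⟩
    refine ⟨h1, fun hmem => ?_⟩
    rw [Set.mem_iUnion₂] at hmem
    obtain ⟨j, hj, hmem⟩ := hmem
    exact h2 j (Set.mem_Iio.1 hj) (Finset.mem_coe.1 hmem)

lemma swap_sums (k : ℕ) (Istar : Finset V) (p : ℕ → V → Prop)
    [∀ i v, Decidable (p i v)] :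
    ∑ v ∈ Istar, ((Finset.range k).filter (fun i => p i v)).card
      = ∑ i ∈ Finset.range k, (Istar.filter (fun v => p i v)).card := by
  calc ∑ v ∈ Istar, ((Finset.range k).filter (fun i => p i v)).card
      = ∑ v ∈ Istar, ∑ i ∈ Finset.range k, if p i v then 1 else 0 :=
        Finset.sum_congr rfl (fun v _ => Finset.card_filter _ _)
    _ = ∑ i ∈ Finset.range k, ∑ v ∈ Istar, if p i v then 1 else 0 := Finset.sum_comm
    _ = ∑ i ∈ Finset.range k, (Istar.filter (fun v => p i v)).card :=
        Finset.sum_congr rfl (fun i _ => (Finset.card_filter _ _).symm)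

lemma arith_combine (KN KI KMk KA SM SU E IC a' : ℕ)
    (hA : a' ≤ IC + E) (h1 : 2 * SM + SU ≤ KN) (h2 : KMk ≤ SM)
    (h3 : KN ≤ KI + KMk) (h4 : 2 * E + KA ≤ SU + KN) :
    KA + 2 * a' ≤ 2 * KI + 2 * IC := by omega

end helpers

theorem stmt7 (G : SimpleGraph V) (hG : G.Colorable 2) (k : ℕ) (hk : 1 ≤ k)
    (M : ℕ → Finset (Sym2 V)) (hM : ∀ i < k, IsMaxMatchingE (resid G M i) (M i))
    (I : Finset V) (hI : IsMaxIndepF (resid G M k) I)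
    (Istar : Finset V) (hIstar : IsMaxKDep G k Istar) :
    (I.card : ℝ) ≥ (1/2 + 1/(2*(k+1))) * Istar.card := by
  classical
  set A : Finset (Sym2 V) := accumM M k with hA
  set Ind : Finset (Sym2 V) := inducedEdges G Istar with hInd
  set E' : Finset (Sym2 V) := Ind \ A with hE'
  have hmemA : ∀ e, e ∈ A ↔ ∃ j < k, e ∈ M j := by
    intro e
    simp [hA, accumM, Finset.mem_biUnion, Finset.mem_range]
  have hMsub : ∀ i, i < k → ∀ e ∈ M i, e ∈ G.edgeSet ∧ ∀ j < i, e ∉ M j := by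
    intro i hi e he
    exact (mem_resid_edgeSet G M i e).1 ((hM i hi).1.1 he)
  have hMdisj : ∀ i, i < k → ∀ j, j < k → i ≠ j → ∀ e ∈ M i, e ∉ M j := by
    intro i hi j hj hne e hei hej
    rcases Nat.lt_or_ge i j with h | h
    · exact (hMsub j hj e hej).2 i h hei
    · exact (hMsub i hi e hei).2 j (lt_of_le_of_ne h (Ne.symm hne)) hej
  have hIndmem : ∀ e, e ∈ Ind ↔ (e ∈ G.edgeSet ∧ ∀ v ∈ e, v ∈ Istar) := by
    intro e
    rw [hInd, inducedEdges, Finset.mem_filter, SimpleGraph.mem_edgeFinset]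
  -- Step A
  have hAstep : Istar.card ≤ I.card + E'.card := by
    set f : Sym2 V → V := fun e => e.out.1 with hf
    set J : Finset V := Istar \ E'.image f with hJ
    have hJind : IsIndepF (resid G M k) J := by
      intro u hu w hw hadj
      rw [resid_adj] at hadj
      have huI := (Finset.mem_sdiff.1 hu).1
      have hwI := (Finset.mem_sdiff.1 hw).1
      have hedge : s(u, w) ∈ E' := by
        rw [hE', Finset.mem_sdiff]
        refine ⟨(hIndmem _).2 ⟨hadj.1, ?_⟩, ?_⟩
        · intro v hv
          rcases Sym2.mem_iff.1 hv with rfl | rfl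
          exacts [huI, hwI]
        · intro hmem
          obtain ⟨j, hj, hmem⟩ := (hmemA _).1 hmem
          exact hadj.2 j hj hmem
      have himg : f s(u, w) ∈ E'.image f := Finset.mem_image_of_mem f hedge
      have hfmem : f s(u, w) ∈ s(u, w) := Sym2.out_fst_mem _
      rcases Sym2.mem_iff.1 hfmem with h | h
      · exact (Finset.mem_sdiff.1 hu).2 (h ▸ himg)
      · exact (Finset.mem_sdiff.1 hw).2 (h ▸ himg)
    have h1 : Istar ⊆ J ∪ E'.image f := by
      intro v hv
      by_cases h : v ∈ E'.image f
      · exact Finset.mem_union_right _ h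
      · exact Finset.mem_union_left _ (Finset.mem_sdiff.2 ⟨hv, h⟩)
    have h2 := (Finset.card_le_card h1).trans (Finset.card_union_le _ _)
    have h3 : (E'.image f).card ≤ E'.card := Finset.card_image_le
    have h4 := hI.2 J hJind
    omega
  -- König part
  have hk1 : k - 1 < k := by omega
  have hcol : (resid G M (k - 1)).Colorable 2 := by
    obtain ⟨C⟩ := hG
    exact ⟨SimpleGraph.Coloring.mk C (fun hadj => C.valid ((resid_adj G M _ _ _).1 hadj).1)⟩
  obtain ⟨J, hJind, hJcard⟩ := koenig (resid G M (k - 1)) hcol (M (k - 1)) (hM (k - 1) hk1)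
  have hJI : J.card ≤ I.card := by
    apply hI.2
    intro u hu w hw hadj
    apply hJind u hu w hw
    rw [resid_adj] at hadj ⊢
    exact ⟨hadj.1, fun j hj => hadj.2 j (by omega)⟩
  have f3 : Fintype.card V ≤ I.card + (M (k - 1)).card := by omega
  -- B1
  have hu_i : ∀ i, i < k →
      2 * (M i).card + (Istar.filter (fun v => ¬ ∃ e ∈ M i, v ∈ e)).card ≤ Fintype.card V := by
    intro i hi
    set Ci : Finset V := (M i).biUnion (fun e => Finset.univ.filter (· ∈ e)) with hCi
    have hpair := (hM i hi).1.2
    have hCicard : Ci.card = 2 * (M i).card := by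
      rw [hCi, Finset.card_biUnion]
      · rw [Finset.sum_congr rfl (fun e he => card_filter_mem_sym2 e
          (SimpleGraph.not_isDiag_of_mem_edgeSet G (hMsub i hi e he).1))]
        rw [Finset.sum_const, smul_eq_mul, mul_comm]
      · intro e he f hf hne
        rw [Function.onFun, Finset.disjoint_left]
        intro v hv hvf
        exact hpair (Finset.mem_coe.2 he) (Finset.mem_coe.2 hf) hne v
          (Finset.mem_filter.1 hv).2 (Finset.mem_filter.1 hvf).2
    have hdisj : Disjoint Ci (Istar.filter (fun v => ¬ ∃ e ∈ M i, v ∈ e)) := by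
      rw [Finset.disjoint_left]
      intro v hv hv2
      obtain ⟨e, he, hve⟩ := Finset.mem_biUnion.1 hv
      exact (Finset.mem_filter.1 hv2).2 ⟨e, he, (Finset.mem_filter.1 hve).2⟩
    calc 2 * (M i).card + (Istar.filter (fun v => ¬ ∃ e ∈ M i, v ∈ e)).card
        = (Ci ∪ Istar.filter (fun v => ¬ ∃ e ∈ M i, v ∈ e)).card := by
          rw [Finset.card_union_of_disjoint hdisj, hCicard]
      _ ≤ Fintype.card V := by
          rw [← Finset.card_univ]
          exact Finset.card_le_card (Finset.subset_univ _)
  have f1 : 2 * (∑ i ∈ Finset.range k, (M i).card)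
      + (∑ i ∈ Finset.range k, (Istar.filter (fun v => ¬ ∃ e ∈ M i, v ∈ e)).card)
      ≤ k * Fintype.card V := by
    have h1 : ∑ i ∈ Finset.range k,
        (2 * (M i).card + (Istar.filter (fun v => ¬ ∃ e ∈ M i, v ∈ e)).card)
        ≤ ∑ _i ∈ Finset.range k, Fintype.card V :=
      Finset.sum_le_sum (fun i hi => hu_i i (Finset.mem_range.1 hi))
    rw [Finset.sum_add_distrib, ← Finset.mul_sum, Finset.sum_const, Finset.card_range,
      smul_eq_mul] at h1
    exact h1
  -- B2
  have f2 : k * (M (k - 1)).card ≤ ∑ i ∈ Finset.range k, (M i).card := by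
    have hmono : ∀ i, i < k → (M (k - 1)).card ≤ (M i).card := by
      intro i hi
      apply (hM i hi).2
      refine ⟨?_, (hM (k - 1) hk1).1.2⟩
      intro e he
      have h1 := hMsub (k - 1) hk1 e (Finset.mem_coe.1 he)
      show e ∈ (resid G M i).edgeSet
      rw [mem_resid_edgeSet]
      exact ⟨h1.1, fun j hj => h1.2 j (by omega)⟩
    calc k * (M (k - 1)).card = ∑ _i ∈ Finset.range k, (M (k - 1)).card := by
          rw [Finset.sum_const, Finset.card_range, smul_eq_mul]
      _ ≤ _ := Finset.sum_le_sum (fun i hi => hmono i (Finset.mem_range.1 hi))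
  -- K1
  have hK1 : ∀ v ∈ Istar, (E'.filter (fun e => v ∈ e)).card
      + ((Finset.range k).filter (fun i => ∃ e ∈ M i, v ∈ e ∧ e ∈ Ind)).card ≤ k := by
    intro v hv
    set Fv : Finset (Sym2 V) := Ind.filter (fun e => v ∈ e) with hFv
    have hFvk : Fv.card ≤ k := by
      have hinj : Set.InjOn (otherV v) Fv := by
        intro e he e' he' heq
        have h1 : v ∈ e := (Finset.mem_filter.1 he).2
        have h1' : v ∈ e' := (Finset.mem_filter.1 he').2
        rw [← otherV_spec h1, ← otherV_spec h1', heq]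
      have hmaps : ∀ e ∈ Fv, otherV v e ∈ Istar.filter (fun w => G.Adj v w) := by
        intro e he
        have h1 : v ∈ e := (Finset.mem_filter.1 he).2
        have h2 := (hIndmem e).1 (Finset.mem_filter.1 he).1
        refine Finset.mem_filter.2 ⟨h2.2 _ (otherV_mem h1), ?_⟩
        rw [← SimpleGraph.mem_edgeSet, otherV_spec h1]
        exact h2.1
      exact (Finset.card_le_card_of_injOn _ hmaps hinj).trans (hIstar.1 v hv)
    have hcin : ((Finset.range k).filter (fun i => ∃ e ∈ M i, v ∈ e ∧ e ∈ Ind)).card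
        ≤ (Fv.filter (fun e => e ∈ A)).card := by
      set g : ℕ → Sym2 V := fun i =>
        if h : ∃ e ∈ M i, v ∈ e ∧ e ∈ Ind then h.choose else s(v, v) with hg
      have hgspec : ∀ i, (∃ e ∈ M i, v ∈ e ∧ e ∈ Ind) →
          g i ∈ M i ∧ v ∈ g i ∧ g i ∈ Ind := by
        intro i h
        rw [hg]
        simp only [dif_pos h]
        exact h.choose_spec
      apply Finset.card_le_card_of_injOn g
      · intro i hi
        obtain ⟨hik, hex⟩ := Finset.mem_filter.1 hi
        obtain ⟨h1, h2, h3⟩ := hgspec i hex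
        exact Finset.mem_filter.2 ⟨Finset.mem_filter.2 ⟨h3, h2⟩,
          (hmemA _).2 ⟨i, Finset.mem_range.1 hik, h1⟩⟩
      · intro i hi j hj heq
        obtain ⟨hik, hexi⟩ := Finset.mem_filter.1 (Finset.mem_coe.1 hi)
        obtain ⟨hjk, hexj⟩ := Finset.mem_filter.1 (Finset.mem_coe.1 hj)
        by_contra hne
        exact hMdisj i (Finset.mem_range.1 hik) j (Finset.mem_range.1 hjk) hne _
          (hgspec i hexi).1 (heq ▸ (hgspec j hexj).1)
    have hdisj2 : Disjoint (E'.filter (fun e => v ∈ e)) (Fv.filter (fun e => e ∈ A)) := by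
      rw [Finset.disjoint_left]
      intro e he heA
      exact (Finset.mem_sdiff.1 (Finset.mem_filter.1 he).1).2 (Finset.mem_filter.1 heA).2
    have hsub2 : E'.filter (fun e => v ∈ e) ∪ Fv.filter (fun e => e ∈ A) ⊆ Fv := by
      intro e he
      rcases Finset.mem_union.1 he with he | he
      · have := Finset.mem_filter.1 he
        exact Finset.mem_filter.2 ⟨(Finset.mem_sdiff.1 this.1).1, this.2⟩
      · exact Finset.filter_subset _ _ he
    have h5 := Finset.card_le_card hsub2
    rw [Finset.card_union_of_disjoint hdisj2] at h5
    omega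
  -- K2
  have hK2 : ∀ v, ((Finset.range k).filter (fun i => ¬ ∃ e ∈ M i, v ∈ e)).card
      + ((Finset.range k).filter (fun i => ∃ e ∈ M i, v ∈ e ∧ e ∈ Ind)).card
      + ((Finset.range k).filter (fun i => ∃ e ∈ M i, v ∈ e ∧ e ∉ Ind)).card = k := by
    intro v
    have h1 := Finset.card_filter_add_card_filter_not
      (s := Finset.range k) (p := fun i => ∃ e ∈ M i, v ∈ e)
    have hsplit : (Finset.range k).filter (fun i => ∃ e ∈ M i, v ∈ e)
        = (Finset.range k).filter (fun i => ∃ e ∈ M i, v ∈ e ∧ e ∈ Ind)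
          ∪ (Finset.range k).filter (fun i => ∃ e ∈ M i, v ∈ e ∧ e ∉ Ind) := by
      ext i
      simp only [Finset.mem_filter, Finset.mem_union]
      constructor
      · rintro ⟨hi, e, he, hve⟩
        by_cases hei : e ∈ Ind
        · exact Or.inl ⟨hi, e, he, hve, hei⟩
        · exact Or.inr ⟨hi, e, he, hve, hei⟩
      · rintro (⟨hi, e, he, hve, _⟩ | ⟨hi, e, he, hve, _⟩) <;> exact ⟨hi, e, he, hve⟩
    have hdisj3 : Disjoint ((Finset.range k).filter (fun i => ∃ e ∈ M i, v ∈ e ∧ e ∈ Ind))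
        ((Finset.range k).filter (fun i => ∃ e ∈ M i, v ∈ e ∧ e ∉ Ind)) := by
      rw [Finset.disjoint_left]
      intro i hi1 hi2
      obtain ⟨hik, e, he, hve, heI⟩ := Finset.mem_filter.1 hi1
      obtain ⟨_, e', he', hve', heI'⟩ := Finset.mem_filter.1 hi2
      have hne : e ≠ e' := fun h => heI' (h ▸ heI)
      exact (hM i (Finset.mem_range.1 hik)).1.2 (Finset.mem_coe.2 he)
        (Finset.mem_coe.2 he') hne v hve hve'
    rw [hsplit, Finset.card_union_of_disjoint hdisj3, Finset.card_range] at h1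
    omega
  -- edge sum
  have hsum2E : ∑ v ∈ Istar, (E'.filter (fun e => v ∈ e)).card = 2 * E'.card := by
    rw [Finset.sum_congr rfl (fun v _ => Finset.card_filter (fun e => v ∈ e) E'),
      Finset.sum_comm]
    have h2 : ∀ e ∈ E', (∑ v ∈ Istar, if v ∈ e then 1 else 0) = 2 := by
      intro e he
      rw [← Finset.card_filter]
      have heInd := (hIndmem e).1 (Finset.mem_sdiff.1 he).1
      have hfil : Istar.filter (fun v => v ∈ e) = Finset.univ.filter (· ∈ e) := by
        ext v
        simp only [Finset.mem_filter, Finset.mem_univ, true_and]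
        exact ⟨fun h => h.2, fun h => ⟨heInd.2 v h, h⟩⟩
      rw [hfil, card_filter_mem_sym2 e (SimpleGraph.not_isDiag_of_mem_edgeSet G heInd.1)]
    rw [Finset.sum_congr rfl h2, Finset.sum_const, smul_eq_mul, mul_comm]
  -- c_out bound
  have hcout : ∀ i, i < k →
      (Istar.filter (fun v => ∃ e ∈ M i, v ∈ e ∧ e ∉ Ind)).card + Istar.card
        ≤ Fintype.card V := by
    intro i hi
    set g : V → Sym2 V := fun v =>
      if h : ∃ e ∈ M i, v ∈ e ∧ e ∉ Ind then h.choose else s(v, v) with hg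
    have hgspec : ∀ v, (∃ e ∈ M i, v ∈ e ∧ e ∉ Ind) →
        g v ∈ M i ∧ v ∈ g v ∧ g v ∉ Ind := by
      intro v h
      rw [hg]
      simp only [dif_pos h]
      exact h.choose_spec
    have hother : ∀ v ∈ Istar.filter (fun v => ∃ e ∈ M i, v ∈ e ∧ e ∉ Ind),
        otherV v (g v) ∉ Istar := by
      intro v hv
      obtain ⟨hvI, hex⟩ := Finset.mem_filter.1 hv
      obtain ⟨h1, h2, h3⟩ := hgspec v hex
      intro hcon
      apply h3
      refine (hIndmem _).2 ⟨(hMsub i hi _ h1).1, ?_⟩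
      intro x hx
      rw [← otherV_spec h2] at hx
      rcases Sym2.mem_iff.1 hx with rfl | rfl
      exacts [hvI, hcon]
    have hcard : (Istar.filter (fun v => ∃ e ∈ M i, v ∈ e ∧ e ∉ Ind)).card
        ≤ (Finset.univ \ Istar).card := by
      apply Finset.card_le_card_of_injOn (fun v => otherV v (g v))
      · intro v hv
        exact Finset.mem_sdiff.2 ⟨Finset.mem_univ _, hother v hv⟩
      · intro v hv w hw heq
        simp only at heq
        obtain ⟨hvI, hexv⟩ := Finset.mem_filter.1 (Finset.mem_coe.1 hv)
        obtain ⟨hwI, hexw⟩ := Finset.mem_filter.1 (Finset.mem_coe.1 hw)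
        obtain ⟨hv1, hv2, _⟩ := hgspec v hexv
        obtain ⟨hw1, hw2, _⟩ := hgspec w hexw
        have hmemv : otherV v (g v) ∈ g v := otherV_mem hv2
        have hmemw : otherV v (g v) ∈ g w := heq ▸ otherV_mem hw2
        have hee : g v = g w := by
          by_contra hne
          exact (hM i hi).1.2 (Finset.mem_coe.2 hv1) (Finset.mem_coe.2 hw1) hne _ hmemv hmemw
        have hs : s(v, otherV v (g v)) = s(w, otherV w (g w)) := by
          rw [otherV_spec hv2, otherV_spec hw2, hee]
        rw [← heq] at hs
        rcases Sym2.eq_iff.1 hs with ⟨h, _⟩ | ⟨h, h'⟩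
        · exact h
        · exfalso
          exact hother v (Finset.mem_coe.1 hv) (h ▸ hvI)
    have h6 : (Finset.univ \ Istar).card = Fintype.card V - Istar.card := by
      rw [Finset.card_sdiff_of_subset (Finset.subset_univ _), Finset.card_univ]
    have h7 : Istar.card ≤ Fintype.card V := Finset.card_le_univ _
    omega
  -- f4
  have f4 : 2 * E'.card + k * Istar.card
      ≤ (∑ i ∈ Finset.range k, (Istar.filter (fun v => ¬ ∃ e ∈ M i, v ∈ e)).card)
        + k * Fintype.card V := by
    have hperv : ∀ v ∈ Istar, (E'.filter (fun e => v ∈ e)).card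
        ≤ ((Finset.range k).filter (fun i => ¬ ∃ e ∈ M i, v ∈ e)).card
          + ((Finset.range k).filter (fun i => ∃ e ∈ M i, v ∈ e ∧ e ∉ Ind)).card := by
      intro v hv
      have h1 := hK1 v hv
      have h2 := hK2 v
      omega
    have hs1 : 2 * E'.card ≤ ∑ v ∈ Istar,
        (((Finset.range k).filter (fun i => ¬ ∃ e ∈ M i, v ∈ e)).card
          + ((Finset.range k).filter (fun i => ∃ e ∈ M i, v ∈ e ∧ e ∉ Ind)).card) := by
      rw [← hsum2E]
      exact Finset.sum_le_sum hperv
    rw [Finset.sum_add_distrib,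
      swap_sums k Istar (fun i v => ¬ ∃ e ∈ M i, v ∈ e),
      swap_sums k Istar (fun i v => ∃ e ∈ M i, v ∈ e ∧ e ∉ Ind)] at hs1
    have hs4 : (∑ i ∈ Finset.range k, (Istar.filter (fun v => ∃ e ∈ M i, v ∈ e ∧ e ∉ Ind)).card)
        + k * Istar.card ≤ k * Fintype.card V := by
      have := Finset.sum_le_sum (f := fun i =>
        (Istar.filter (fun v => ∃ e ∈ M i, v ∈ e ∧ e ∉ Ind)).card + Istar.card)
        (g := fun _ => Fintype.card V)
        (fun i hi => hcout i (Finset.mem_range.1 hi))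
      rwa [Finset.sum_add_distrib, Finset.sum_const, Finset.sum_const, Finset.card_range,
        smul_eq_mul, smul_eq_mul] at this
    calc 2 * E'.card + k * Istar.card
        ≤ ((∑ i ∈ Finset.range k, (Istar.filter (fun v => ¬ ∃ e ∈ M i, v ∈ e)).card)
          + (∑ i ∈ Finset.range k,
              (Istar.filter (fun v => ∃ e ∈ M i, v ∈ e ∧ e ∉ Ind)).card)) + k * Istar.card :=
          Nat.add_le_add_right hs1 _
      _ = (∑ i ∈ Finset.range k, (Istar.filter (fun v => ¬ ∃ e ∈ M i, v ∈ e)).card)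
          + ((∑ i ∈ Finset.range k,
              (Istar.filter (fun v => ∃ e ∈ M i, v ∈ e ∧ e ∉ Ind)).card) + k * Istar.card) := by
          ring
      _ ≤ _ := Nat.add_le_add_left hs4 _
  -- combine
  have hmul : k * Fintype.card V ≤ k * I.card + k * (M (k - 1)).card := by
    calc k * Fintype.card V ≤ k * (I.card + (M (k - 1)).card) := Nat.mul_le_mul_left k f3
      _ = k * I.card + k * (M (k - 1)).card := by ring
  have hfinal : k * Istar.card + 2 * Istar.card ≤ 2 * (k * I.card) + 2 * I.card := by
    have := arith_combine (k * Fintype.card V) (k * I.card) (k * (M (k - 1)).card)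
      (k * Istar.card) (∑ i ∈ Finset.range k, (M i).card)
      (∑ i ∈ Finset.range k, (Istar.filter (fun v => ¬ ∃ e ∈ M i, v ∈ e)).card)
      E'.card I.card Istar.card hAstep f1 f2 hmul (by linarith [f4])
    omega
  -- to ℝ
  have hR : (k : ℝ) * Istar.card + 2 * Istar.card ≤ 2 * ((k : ℝ) * I.card) + 2 * I.card := by
    exact_mod_cast hfinal
  rw [ge_iff_le]
  have hpos : (0 : ℝ) < 2 * ((k : ℝ) + 1) := by positivity
  rw [show (1/2 + 1/(2*((k : ℝ)+1))) = ((k : ℝ)+2)/(2*((k : ℝ)+1)) by field_simp; ring]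
  rw [div_mul_eq_mul_div, div_le_iff₀ hpos]
  nlinarith [hR]
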